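/- With Q and x* as above (Q = {x : ‖x‖² ≤ r², Ax ≤ b} with nonempty interior, x* its analytic center, H = ∇²Φ(x*)): every relevance measure ηᵢ = (bᵢ − aᵢᵀx*)/sqrt(aᵢᵀ H⁻¹ aᵢ) satisfies ηᵢ ≥ 1 for each i with aᵢ ≠ 0. -/

import Mathlib

open Matrix

noncomputable def barrier {n m : ℕ} (a : Fin m → Fin n → ℝ) (b : Fin m → ℝ) (r : ℝ)
    (x : Fin n → ℝ) : ℝ :=
  -Real.log (r ^ 2 - ∑ j, x j ^ 2) - ∑ i, Real.log (b i - a i ⬝ᵥ x)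

def interiorDom {n m : ℕ} (a : Fin m → Fin n → ℝ) (b : Fin m → ℝ) (r : ℝ) :
    Set (Fin n → ℝ) :=
  {x | (∑ j, x j ^ 2) < r ^ 2 ∧ ∀ i, a i ⬝ᵥ x < b i}

noncomputable def barrierHess {n m : ℕ} (a : Fin m → Fin n → ℝ) (b : Fin m → ℝ) (r : ℝ)
    (xstar : Fin n → ℝ) : Matrix (Fin n) (Fin n) ℝ :=
  (2 / (r ^ 2 - ∑ j, xstar j ^ 2)) • (1 : Matrix (Fin n) (Fin n) ℝ) +
    (4 / (r ^ 2 - ∑ j, xstar j ^ 2) ^ 2) • vecMulVec xstar xstar +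
    ∑ i, (1 / (b i - a i ⬝ᵥ xstar) ^ 2) • vecMulVec (a i) (a i)

noncomputable def relevance {n m : ℕ} (a : Fin m → Fin n → ℝ) (b : Fin m → ℝ) (r : ℝ)
    (xstar : Fin n → ℝ) (i : Fin m) : ℝ :=
  (b i - a i ⬝ᵥ xstar) / Real.sqrt (a i ⬝ᵥ (barrierHess a b r xstar)⁻¹.mulVec (a i))

lemma vecMulVec_mulVec' {n : ℕ} (v y : Fin n → ℝ) : (vecMulVec v v).mulVec y = (v ⬝ᵥ y) • v := by
  ext j; simp [mulVec, vecMulVec_apply, dotProduct, Finset.mul_sum, mul_comm, mul_assoc,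
    mul_left_comm]

lemma sum_mulVec' {n m : ℕ} (M : Fin m → Matrix (Fin n) (Fin n) ℝ) (y : Fin n → ℝ) :
    (∑ i, M i).mulVec y = ∑ i, (M i).mulVec y := by
  ext j
  simp [mulVec, dotProduct, Finset.sum_apply, Finset.sum_mul, Matrix.sum_apply]
  rw [Finset.sum_comm]

lemma dot_sum' {n m : ℕ} (y : Fin n → ℝ) (w : Fin m → Fin n → ℝ) :
    y ⬝ᵥ (∑ i, w i) = ∑ i, y ⬝ᵥ w i := by
  simp [dotProduct, Finset.sum_apply, Finset.mul_sum]
  rw [Finset.sum_comm]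

lemma quadForm {n m : ℕ} (a : Fin m → Fin n → ℝ) (b : Fin m → ℝ) (r : ℝ)
    (x : Fin n → ℝ) (y : Fin n → ℝ) :
    y ⬝ᵥ (barrierHess a b r x).mulVec y =
      (2 / (r ^ 2 - ∑ j, x j ^ 2)) * (∑ j, y j ^ 2) +
      (4 / (r ^ 2 - ∑ j, x j ^ 2) ^ 2) * (x ⬝ᵥ y) ^ 2 +
      ∑ i, (1 / (b i - a i ⬝ᵥ x) ^ 2) * (a i ⬝ᵥ y) ^ 2 := by
  simp only [barrierHess, add_mulVec, smul_mulVec, sum_mulVec', one_mulVec,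
    dotProduct_add, dotProduct_smul, dot_sum', vecMulVec_mulVec', smul_eq_mul]
  congr 1
  congr 1
  · congr 1; simp [dotProduct, sq]
  · rw [dotProduct_comm y x]; ring
  · refine Finset.sum_congr rfl fun i _ => ?_
    rw [dotProduct_comm y (a i)]; ring

lemma barrierHess_herm {n m : ℕ} (a : Fin m → Fin n → ℝ) (b : Fin m → ℝ) (r : ℝ)
    (x : Fin n → ℝ) : (barrierHess a b r x).IsHermitian := by
  show (barrierHess a b r x)ᴴ = _
  ext i j
  simp [barrierHess, Matrix.add_apply, Matrix.smul_apply, Matrix.sum_apply, vecMulVec_apply,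
    Matrix.one_apply, conjTranspose_apply, eq_comm, mul_comm]

lemma barrierHess_posDef {n m : ℕ} (a : Fin m → Fin n → ℝ) (b : Fin m → ℝ) (r : ℝ)
    (x : Fin n → ℝ) (hx : x ∈ interiorDom a b r) : (barrierHess a b r x).PosDef := by
  have hα : 0 < r ^ 2 - ∑ j, x j ^ 2 := by have := hx.1; linarith
  refine PosDef.of_dotProduct_mulVec_pos (barrierHess_herm a b r x) fun y hy => ?_
  have hstar : star y = y := by simp
  rw [hstar, quadForm]
  have h1 : 0 < (2 / (r ^ 2 - ∑ j, x j ^ 2)) * (∑ j, y j ^ 2) := by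
    apply mul_pos (by positivity)
    have : ∃ j, y j ≠ 0 := by
      by_contra h
      push_neg at h
      exact hy (funext h)
    obtain ⟨j, hj⟩ := this
    exact Finset.sum_pos' (fun k _ => sq_nonneg _) ⟨j, Finset.mem_univ j, by positivity⟩
  have h2 : 0 ≤ (4 / (r ^ 2 - ∑ j, x j ^ 2) ^ 2) * (x ⬝ᵥ y) ^ 2 := by positivity
  have h3 : 0 ≤ ∑ i, (1 / (b i - a i ⬝ᵥ x) ^ 2) * (a i ⬝ᵥ y) ^ 2 :=
    Finset.sum_nonneg fun i _ => by positivity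
  linarith

/-- Every relevance measure is at least 1 at the analytic center. -/
theorem relevance_ge_one {n m : ℕ}
    (a : Fin m → Fin n → ℝ) (b : Fin m → ℝ) (r : ℝ) (hr : 0 < r)
    (xstar : Fin n → ℝ) (hxstar : xstar ∈ interiorDom a b r)
    (hmin : ∀ x ∈ interiorDom a b r, barrier a b r xstar ≤ barrier a b r x)
    (i : Fin m) (hai : a i ≠ 0) :
    1 ≤ relevance a b r xstar i := by
  set H := barrierHess a b r xstar with hH
  have hpd : H.PosDef := barrierHess_posDef a b r xstar hxstar
  have hc : 0 < b i - a i ⬝ᵥ xstar := by have := hxstar.2 i; linarith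
  have hα : 0 < r ^ 2 - ∑ j, xstar j ^ 2 := by have := hxstar.1; linarith
  have hinv : H⁻¹.PosDef := hpd.inv
  set y := H⁻¹.mulVec (a i) with hy
  set t := a i ⬝ᵥ y with htdef
  have ht : 0 < t := by
    have := hinv.dotProduct_mulVec_pos hai
    simpa [htdef, hy] using this
  -- H *ᵥ y = a i
  have hHy : H.mulVec y = a i := by
    rw [hy, mulVec_mulVec, Matrix.mul_nonsing_inv _ (isUnit_iff_ne_zero.mpr hpd.det_pos.ne'),
      one_mulVec]
  -- quadratic form bound
  have hq : y ⬝ᵥ H.mulVec y = t := by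
    rw [hHy, dotProduct_comm]
  have hquad := quadForm a b r xstar y
  have hge : (1 / (b i - a i ⬝ᵥ xstar) ^ 2) * (a i ⬝ᵥ y) ^ 2 ≤ y ⬝ᵥ H.mulVec y := by
    rw [hquad]
    have h1 : 0 ≤ (2 / (r ^ 2 - ∑ j, xstar j ^ 2)) * (∑ j, y j ^ 2) := by
      apply mul_nonneg (by positivity) (Finset.sum_nonneg fun j _ => sq_nonneg _)
    have h2 : 0 ≤ (4 / (r ^ 2 - ∑ j, xstar j ^ 2) ^ 2) * (xstar ⬝ᵥ y) ^ 2 := by positivity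
    have h3 : (1 / (b i - a i ⬝ᵥ xstar) ^ 2) * (a i ⬝ᵥ y) ^ 2 ≤
        ∑ k, (1 / (b k - a k ⬝ᵥ xstar) ^ 2) * (a k ⬝ᵥ y) ^ 2 :=
      Finset.single_le_sum (f := fun k => (1 / (b k - a k ⬝ᵥ xstar) ^ 2) * (a k ⬝ᵥ y) ^ 2)
        (fun k _ => by positivity) (Finset.mem_univ i)
    linarith
  rw [hq] at hge
  -- conclude t ≤ c²
  have htc : t ≤ (b i - a i ⬝ᵥ xstar) ^ 2 := by
    rw [← htdef] at hge
    have hc2 : 0 < (b i - a i ⬝ᵥ xstar) ^ 2 := by positivity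
    have h := mul_le_mul_of_nonneg_left hge hc2.le
    rw [← mul_assoc, mul_one_div, div_self hc2.ne', one_mul] at h
    nlinarith
  have hsq : Real.sqrt t ≤ b i - a i ⬝ᵥ xstar := by
    calc Real.sqrt t ≤ Real.sqrt ((b i - a i ⬝ᵥ xstar) ^ 2) := Real.sqrt_le_sqrt htc
      _ = b i - a i ⬝ᵥ xstar := Real.sqrt_sq hc.le
  have hsqpos : 0 < Real.sqrt t := Real.sqrt_pos.mpr ht
  rw [relevance, one_le_div hsqpos]
  exact hsq
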